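/- arXiv:1609.02086 — 2 statements merged into one kernel-verified Lean document; each statement's English description precedes it below -/
import Mathlib

section
/- Let M be an interval persistence module over a poset P with underlying interval I, and let N be an interval module with underlying interval J. If χ: M → N is a morphism of persistence modules and A = I ∩ J is an interval, then for all a, b ∈ A, the linear maps χ_a and χ_b are equal as k-endomorphisms (i.e., they are multiplication by the same scalar). -/
open CategoryTheory Classical

noncomputable section

/-- Convexity of a subset of a poset. -/
def IsConvex {P : Type} [Preorder P] (I : Set P) : Prop :=
  ∀ ⦃p q r : P⦄, p ∈ I → q ∈ I → p ≤ r → r ≤ q → r ∈ I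

/-- Zigzag connectivity within a subset. -/
def ZigzagConnected {P : Type} [Preorder P] (I : Set P) : Prop :=
  ∀ p ∈ I, ∀ q ∈ I,
    Relation.ReflTransGen (fun a b => a ∈ I ∧ b ∈ I ∧ (a ≤ b ∨ b ≤ a)) p q

/-- An interval in a poset: nonempty, convex, and zigzag connected. -/
def IsIntervalSet {P : Type} [Preorder P] (I : Set P) : Prop :=
  I.Nonempty ∧ IsConvex I ∧ ZigzagConnected I

open scoped Classical in
/-- The pointwise vector space of the interval module: `k` (as `⊤`) on `I`, `0` off `I`. -/
def objSub (k : Type) [Field k] {P : Type} [Preorder P] (I : Set P) (p : P) : Submodule k k :=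
  if p ∈ I then ⊤ else ⊥

open scoped Classical in
/-- The interval persistence module `𝕀^I` as a functor `P ⥤ ModuleCat k`. -/
def intervalModule (k : Type) [Field k] {P : Type} [Preorder P] (I : Set P)
    (hI : IsConvex I) : P ⥤ ModuleCat.{0} k where
  obj p := ModuleCat.of k (objSub k I p)
  map {p q} h :=
    if hpq : p ∈ I ∧ q ∈ I then
      ModuleCat.ofHom
        { toFun := fun x => ⟨(x : k), by simp [objSub, hpq.2]⟩
          map_add' := by intros; rfl
          map_smul' := by intros; rfl }
    else 0
  map_id := by
    intro p
    try dsimp only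
    by_cases hp : p ∈ I
    · rw [dif_pos ⟨hp, hp⟩]; rfl
    · rw [dif_neg (fun h => hp h.1)]
      haveI : Subsingleton ↥(objSub k I p) := by
        rw [objSub, if_neg hp]; infer_instance
      apply ModuleCat.hom_ext; apply LinearMap.ext; intro x
      exact this.allEq _ _
  map_comp := by
    intro p q r hpq hqr
    try dsimp only
    by_cases hpr : p ∈ I ∧ r ∈ I
    · have hq : q ∈ I := hI hpr.1 hpr.2 (leOfHom hpq) (leOfHom hqr)
      rw [dif_pos hpr, dif_pos ⟨hpr.1, hq⟩, dif_pos ⟨hq, hpr.2⟩]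
      rfl
    · rw [dif_neg hpr]
      by_cases hp : p ∈ I
      · have hr : r ∉ I := fun hr => hpr ⟨hp, hr⟩
        haveI : Subsingleton ↥(objSub k I r) := by
          rw [objSub, if_neg hr]; infer_instance
        apply ModuleCat.hom_ext; apply LinearMap.ext; intro x
        exact this.allEq _ _
      · haveI : Subsingleton ↥(objSub k I p) := by
          rw [objSub, if_neg hp]; infer_instance
        apply ModuleCat.hom_ext; apply LinearMap.ext; intro x
        have hx : x = 0 := this.allEq x 0
        rw [hx]
        simp


/-- The scalar value of an element of an interval module at a point. -/
def imVal (k : Type) [Field k] {P : Type} [Preorder P] {I : Set P} {hI : IsConvex I}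
    {p : P} (x : ((intervalModule k I hI).obj p : Type)) : k := x.1

/-- If `M = 𝕀^I` and `N = 𝕀^J` are interval modules over a poset `P`,
`χ : M ⟶ N` is a morphism of persistence modules, and `A = I ∩ J` is an interval,
then for all `a, b ∈ A` the components `χ_a` and `χ_b` agree as `k`-endomorphisms
(they are multiplication by the same scalar). -/
theorem interval_morphism_constant_scalar
    (k : Type) [Field k] {P : Type} [PartialOrder P]
    (I J : Set P) (hI : IsIntervalSet I) (hJ : IsIntervalSet J)
    (hA : IsIntervalSet (I ∩ J))
    (χ : intervalModule k I hI.2.1 ⟶ intervalModule k J hJ.2.1)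
    (a b : P) (ha : a ∈ I ∩ J) (hb : b ∈ I ∩ J) (x : k) :
    imVal k (χ.app a ⟨x, by simp [objSub, ha.1]⟩) =
      imVal k (χ.app b ⟨x, by simp [objSub, hb.1]⟩) := by
  have hx : ∀ p, p ∈ I → x ∈ objSub k I p := by
    intro p hp; simp [objSub, hp]
  have step : ∀ (p q : P), p ∈ I ∩ J → q ∈ I ∩ J → p ≤ q →
      ∀ (hxp : x ∈ objSub k I p) (hxq : x ∈ objSub k I q),
      imVal k (χ.app p ⟨x, hxp⟩) = imVal k (χ.app q ⟨x, hxq⟩) := by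
    intro p q hp hq hpq hxp hxq
    have hnat := χ.naturality (homOfLE hpq)
    have h := congrArg (fun f => f.hom (⟨x, hxp⟩ : (intervalModule k I hI.2.1).obj p)) hnat
    have hM : (intervalModule k I hI.2.1).map (homOfLE hpq) ⟨x, hxp⟩ = ⟨x, hxq⟩ := by
      show ((intervalModule k I hI.2.1).map (homOfLE hpq)) ⟨x, hxp⟩ = _
      delta intervalModule
      dsimp only
      rw [dif_pos ⟨hp.1, hq.1⟩]
      rfl
    have hN : ∀ y : ((intervalModule k J hJ.2.1).obj p : Type),
        imVal k ((intervalModule k J hJ.2.1).map (homOfLE hpq) y) = imVal k y := by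
      intro y
      delta intervalModule
      dsimp only
      rw [dif_pos ⟨hp.2, hq.2⟩]
      rfl
    have h' : χ.app q ((intervalModule k I hI.2.1).map (homOfLE hpq) ⟨x, hxp⟩) =
        (intervalModule k J hJ.2.1).map (homOfLE hpq) (χ.app p ⟨x, hxp⟩) := h
    rw [hM] at h'
    rw [h', hN]
  suffices H : ∀ {p q : P},
      Relation.ReflTransGen (fun a b => a ∈ I ∩ J ∧ b ∈ I ∩ J ∧ (a ≤ b ∨ b ≤ a)) p q →
      ∀ (hp : p ∈ I ∩ J) (hq : q ∈ I ∩ J),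
        imVal k (χ.app p ⟨x, hx p hp.1⟩) = imVal k (χ.app q ⟨x, hx q hq.1⟩) by
    exact H (hA.2.2 a ha b hb) ha hb
  intro p q h
  induction h with
  | refl => intro _ _; rfl
  | @tail u v _ hrel ih =>
    intro hp hv
    obtain ⟨huA, hvA, hle | hle⟩ := hrel
    · exact (ih hp huA).trans (step u v huA hvA hle _ _)
    · exact (ih hp huA).trans ((step v u hvA huA hle _ _).symm)
end
end

section
/- Let R and S be rectangles in ℝ^n (products of real intervals), and let χ: 𝕀^R → 𝕀^S be a nonzero morphism of persistence modules. Then for every coordinate i, the infimum of S_i is at most the infimum of R_i and the supremum of S_i is at most the supremum of R_i, with the corresponding comparisons of endpoint inclusion when infima/suprema coincide (i.e., min_S ≤ min_R and max_S ≤ max_R as decorated points). -/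
open CategoryTheory Classical

noncomputable section

open DirectSum

open scoped ENNReal

/-- Direct sum of a family of persistence modules. -/
def dsumF (k : Type) [Field k] {P : Type} [Preorder P] {ι : Type}
    (F : ι → P ⥤ ModuleCat.{0} k) : P ⥤ ModuleCat.{0} k where
  obj p := ModuleCat.of k (⨁ i, ((F i).obj p : Type))
  map {p q} h := ModuleCat.ofHom
    (DFinsupp.mapRange.linearMap (fun i => ((F i).map h).hom))
  map_id := by
    intro p
    try dsimp only
    simp only [CategoryTheory.Functor.map_id, ModuleCat.hom_id]
    rw [DFinsupp.mapRange.linearMap_id]; rfl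
  map_comp := by
    intro p q r hpq hqr
    try dsimp only
    simp only [CategoryTheory.Functor.map_comp]
    apply ModuleCat.hom_ext; apply LinearMap.ext; intro x
    apply DFinsupp.ext; intro i
    rfl

/-- Use the preorder category structure on `Fin n → ℝ`. -/
instance RnCat (n : ℕ) : Category (Fin n → ℝ) := Preorder.smallCategory _

/-- Diagonal translation by `ε` as an endofunctor of the poset `Fin n → ℝ`. -/
def transl (n : ℕ) (ε : ℝ) : (Fin n → ℝ) ⥤ (Fin n → ℝ) :=
  Monotone.functor (f := fun p i => p i + ε)
    (fun _ _ hab i => add_le_add (hab i) le_rfl)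

/-- `M` and `N` are `ε`-interleaved `ℝⁿ`-persistence modules. -/
def Interleaved (k : Type) [Field k] {n : ℕ} (ε : ℝ)
    (M N : (Fin n → ℝ) ⥤ ModuleCat.{0} k) : Prop :=
  ∃ _hε : 0 ≤ ε, ∃ (f : M ⟶ transl n ε ⋙ N) (g : N ⟶ transl n ε ⋙ M),
    (∀ p : Fin n → ℝ, f.app p ≫ g.app (fun i => p i + ε) =
      M.map (homOfLE (show p ≤ fun i => p i + ε + ε from
        fun i => by show p i ≤ p i + ε + ε; linarith))) ∧
    (∀ p : Fin n → ℝ, g.app p ≫ f.app (fun i => p i + ε) =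
      N.map (homOfLE (show p ≤ fun i => p i + ε + ε from
        fun i => by show p i ≤ p i + ε + ε; linarith)))

/-- An interval `I ⊆ ℝⁿ` is `δ`-trivial: it contains no pair `p ≤ p + δ`. -/
def SetTrivial {n : ℕ} (δ : ℝ) (I : Set (Fin n → ℝ)) : Prop :=
  ¬ ∃ p, p ∈ I ∧ (fun i => p i + δ) ∈ I

/-- Barcode data: an indexed family of nonempty convex intervals in `ℝⁿ`. -/
structure Barcode (n : ℕ) where
  ι : Type
  I : ι → Set (Fin n → ℝ)
  nonempty : ∀ i, (I i).Nonempty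
  conv : ∀ i, IsConvex (I i)

/-- The interval decomposable module associated to barcode data. -/
def Barcode.module (k : Type) [Field k] {n : ℕ} (B : Barcode n) :
    (Fin n → ℝ) ⥤ ModuleCat.{0} k :=
  dsumF k fun i => intervalModule k (B.I i) (B.conv i)

/-- `B` is pointwise finite dimensional. -/
def Barcode.pfd (k : Type) [Field k] {n : ℕ} (B : Barcode n) : Prop :=
  ∀ p : Fin n → ℝ, Module.Finite k ((B.module k).obj p)

/-- An `ε`-matching between two barcodes: a partial bijection such that unmatched
intervals are `2ε`-trivial and matched intervals are `ε`-interleaved. -/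
def Matched (k : Type) [Field k] {n : ℕ} (ε : ℝ) (B C : Barcode n) : Prop :=
  0 ≤ ε ∧ ∃ (A : Set B.ι) (A' : Set C.ι) (e : A ≃ A'),
    (∀ i ∉ A, SetTrivial (2 * ε) (B.I i)) ∧
    (∀ j ∉ A', SetTrivial (2 * ε) (C.I j)) ∧
    (∀ i : A, Interleaved k ε
      (intervalModule k (B.I i) (B.conv i))
      (intervalModule k (C.I (e i)) (C.conv (e i))))

/-- The interleaving distance, valued in `ℝ≥0∞`. -/
def dInt (k : Type) [Field k] {n : ℕ} (M N : (Fin n → ℝ) ⥤ ModuleCat.{0} k) : ℝ≥0∞ :=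
  ⨅ (ε : ℝ) (_ : Interleaved k ε M N), ENNReal.ofReal ε

/-- The bottleneck distance between barcodes, valued in `ℝ≥0∞`. -/
def dBot (k : Type) [Field k] {n : ℕ} (B C : Barcode n) : ℝ≥0∞ :=
  ⨅ (ε : ℝ) (_ : Matched k ε B C), ENNReal.ofReal ε

/-- Rectangles: products of real intervals. -/
def rectSet {n : ℕ} (R : Fin n → Set ℝ) : Set (Fin n → ℝ) := {x | ∀ i, x i ∈ R i}

theorem rectSet_convex {n : ℕ} (R : Fin n → Set ℝ) (h : ∀ i, (R i).OrdConnected) :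
    IsConvex (rectSet R) := by
  intro p q r hp hq hpr hrq i
  exact (h i).out (hp i) (hq i) ⟨hpr i, hrq i⟩

/-- A barcode consists of rectangles. -/
def IsRectBarcode {n : ℕ} (B : Barcode n) : Prop :=
  ∀ i, ∃ R : Fin n → Set ℝ,
    (∀ j, (R j).Nonempty ∧ (R j).OrdConnected) ∧ B.I i = rectSet R

/-- Decorated numbers: an extended real endpoint with a decoration,
`false` = `−` (closed side), `true` = `+` (open side), ordered lexicographically
so that `a⁻ < a⁺` and `a^* < b^*` whenever `a < b`. -/
def DecNum := Lex (EReal × Bool)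

noncomputable instance : LinearOrder DecNum :=
  inferInstanceAs (LinearOrder (Lex (EReal × Bool)))

open scoped Classical in
/-- The decorated lower endpoint of a subset of `ℝ`. -/
noncomputable def lowDec (I : Set ℝ) : DecNum :=
  toLex (sInf ((↑) '' I : Set EReal),
    if sInf ((↑) '' I : Set EReal) ∈ ((↑) '' I : Set EReal) then false else true)

open scoped Classical in
/-- The decorated upper endpoint of a subset of `ℝ`. -/
noncomputable def highDec (I : Set ℝ) : DecNum :=
  toLex (sSup ((↑) '' I : Set EReal),
    if sSup ((↑) '' I : Set EReal) ∈ ((↑) '' I : Set EReal) then true else false)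

/-- The decorated point `min_R` of a rectangle with factors `R`. -/
noncomputable def minDec {n : ℕ} (R : Fin n → Set ℝ) : Fin n → DecNum :=
  fun i => lowDec (R i)

/-- The decorated point `max_R` of a rectangle with factors `R`. -/
noncomputable def maxDec {n : ℕ} (R : Fin n → Set ℝ) : Fin n → DecNum :=
  fun i => highDec (R i)

/-- `u` of a decorated number: the underlying real number, `0` for `±∞`. -/
noncomputable def uDec (d : DecNum) : ℝ := (ofLex d).1.toReal

/-- `α` of a rectangle with factors `R`. -/
noncomputable def alphaR {n : ℕ} (R : Fin n → Set ℝ) : ℝ :=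
  (∑ i, uDec (minDec R i)) + (∑ i, uDec (maxDec R i))

open scoped Classical in
/-- `P` of a rectangle: the number of endpoint decorations equal to `+`. -/
noncomputable def PR {n : ℕ} (R : Fin n → Set ℝ) : ℕ :=
  (Finset.univ.filter fun i => (ofLex (minDec R i)).2 = true).card +
    (Finset.univ.filter fun i => (ofLex (maxDec R i)).2 = true).card

/-- The preorder `≤_α` on rectangles. -/
noncomputable def leAlpha {n : ℕ} (R S : Fin n → Set ℝ) : Prop :=
  alphaR R < alphaR S ∨ (alphaR R = alphaR S ∧ PR R ≤ PR S)

/-- Two rectangles are of the same type if all coordinatewise set differences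
are bounded. -/
def SameType {n : ℕ} (R S : Fin n → Set ℝ) : Prop :=
  ∀ i, Bornology.IsBounded (R i \ S i) ∧ Bornology.IsBounded (S i \ R i)

/-- `I ⊆ ℝⁿ` is `δ`-significant. -/
def SetSignificant {n : ℕ} (δ : ℝ) (I : Set (Fin n → ℝ)) : Prop :=
  ∃ p, p ∈ I ∧ (fun i => p i + δ) ∈ I

/-- Rectangle factor data: each factor is a nonempty ordered-connected real interval. -/
def IsRectFactors {n : ℕ} (R : Fin n → Set ℝ) : Prop :=
  ∀ i, (R i).Nonempty ∧ (R i).OrdConnected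


section Aux

lemma objSub_subsingleton' (k : Type) [Field k] {P : Type} [Preorder P] {I : Set P} {p : P}
    (hp : p ∉ I) : Subsingleton (objSub k I p) := by
  rw [objSub, if_neg hp]; infer_instance

lemma one_mem_objSub (k : Type) [Field k] {P : Type} [Preorder P] {I : Set P} {p : P}
    (hp : p ∈ I) (c : k) : c ∈ objSub k I p := by
  rw [objSub, if_pos hp]; trivial

open scoped Classical in
lemma intervalModule_map_coe (k : Type) [Field k] {P : Type} [Preorder P] {I : Set P}
    (hI : IsConvex I) {p q : P} (f : p ⟶ q) (hpq : p ∈ I ∧ q ∈ I)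
    (x : objSub k I p) :
    (((intervalModule k I hI).map f) x).1 = x.1 := by
  show ((if h : p ∈ I ∧ q ∈ I then ModuleCat.ofHom
        { toFun := fun x : objSub k I p => (⟨(x : k), by simp [objSub, h.2]⟩ : objSub k I q)
          map_add' := by intros; rfl
          map_smul' := by intros; rfl }
      else 0) x).1 = x.1
  rw [dif_pos hpq]
  rfl

open scoped Classical in
lemma intervalModule_map_zero' (k : Type) [Field k] {P : Type} [Preorder P] {I : Set P}
    (hI : IsConvex I) {p q : P} (f : p ⟶ q) (hpq : ¬ (p ∈ I ∧ q ∈ I)) :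
    (intervalModule k I hI).map f = 0 := by
  show (if h : p ∈ I ∧ q ∈ I then ModuleCat.ofHom
        { toFun := fun x : objSub k I p => (⟨(x : k), by simp [objSub, h.2]⟩ : objSub k I q)
          map_add' := by intros; rfl
          map_smul' := by intros; rfl }
      else 0) = 0
  rw [dif_neg hpq]

lemma lowDec_mono {A B : Set ℝ} {c : ℝ} (hcA : c ∈ A) (hcB : c ∈ B)
    (h : ∀ a ∈ A, a ≤ c → a ∈ B) : lowDec B ≤ lowDec A := by
  classical
  have hle : sInf ((↑) '' B : Set EReal) ≤ sInf ((↑) '' A : Set EReal) := by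
    apply le_sInf
    rintro x ⟨a, ha, rfl⟩
    rcases le_total a c with h1 | h1
    · exact sInf_le ⟨a, h a ha h1, rfl⟩
    · exact le_trans (sInf_le ⟨c, hcB, rfl⟩) (EReal.coe_le_coe_iff.mpr h1)
  rw [lowDec, lowDec]
  rcases lt_or_eq_of_le hle with hlt | heq
  · exact Prod.Lex.le_iff.mpr (Or.inl hlt)
  · refine Prod.Lex.le_iff.mpr (Or.inr ⟨heq, ?_⟩)
    by_cases hA : sInf ((↑) '' A : Set EReal) ∈ ((↑) '' A : Set EReal)
    · obtain ⟨a, haA, hav⟩ := id hA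
      have hac : a ≤ c := by
        have : (a : EReal) ≤ (c : EReal) := by
          rw [hav]; exact sInf_le ⟨c, hcA, rfl⟩
        exact EReal.coe_le_coe_iff.mp this
      have hB : sInf ((↑) '' B : Set EReal) ∈ ((↑) '' B : Set EReal) :=
        ⟨a, h a haA hac, by rw [hav, heq]⟩
      rw [if_pos hA, if_pos hB]; exact le_rfl
    · rw [if_neg hA]
      exact Bool.le_true _

lemma highDec_mono {A B : Set ℝ} {c : ℝ} (hcA : c ∈ A) (hcB : c ∈ B)
    (h : ∀ b ∈ B, c ≤ b → b ∈ A) : highDec B ≤ highDec A := by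
  classical
  have hle : sSup ((↑) '' B : Set EReal) ≤ sSup ((↑) '' A : Set EReal) := by
    apply sSup_le
    rintro x ⟨b, hb, rfl⟩
    rcases le_total c b with h1 | h1
    · exact le_sSup ⟨b, h b hb h1, rfl⟩
    · exact le_trans (EReal.coe_le_coe_iff.mpr h1) (le_sSup ⟨c, hcA, rfl⟩)
  rw [highDec, highDec]
  rcases lt_or_eq_of_le hle with hlt | heq
  · exact Prod.Lex.le_iff.mpr (Or.inl hlt)
  · refine Prod.Lex.le_iff.mpr (Or.inr ⟨heq, ?_⟩)
    by_cases hB : sSup ((↑) '' B : Set EReal) ∈ ((↑) '' B : Set EReal)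
    · obtain ⟨b, hbB, hbv⟩ := id hB
      have hcb : c ≤ b := by
        have : (c : EReal) ≤ (b : EReal) := by
          rw [hbv]; exact le_sSup ⟨c, hcB, rfl⟩
        exact EReal.coe_le_coe_iff.mp this
      have hA : sSup ((↑) '' A : Set EReal) ∈ ((↑) '' A : Set EReal) :=
        ⟨b, h b hbB hcb, by rw [hbv, ← heq]⟩
      rw [if_pos hA, if_pos hB]; exact le_rfl
    · rw [if_neg hB]
      exact Bool.false_le _

end Aux

/-- A nonzero morphism `χ : 𝕀^R ⟶ 𝕀^S` between rectangle modules forces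
`min_S ≤ min_R` and `max_S ≤ max_R` as decorated points. -/
theorem nonzero_rect_morphism_endpoints
    (k : Type) [Field k] {n : ℕ} (R S : Fin n → Set ℝ)
    (hR : IsRectFactors R) (hS : IsRectFactors S)
    (χ : intervalModule k (rectSet R) (rectSet_convex R fun i => (hR i).2) ⟶
      intervalModule k (rectSet S) (rectSet_convex S fun i => (hS i).2))
    (hχ : χ ≠ 0) :
    minDec S ≤ minDec R ∧ maxDec S ≤ maxDec R := by
  classical
  obtain ⟨p, hp⟩ : ∃ p, χ.app p ≠ 0 := by
    by_contra h
    push_neg at h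
    exact hχ (by ext p : 2; rw [h p]; rfl)
  have hpR : p ∈ rectSet R := by
    by_contra h
    haveI := objSub_subsingleton' k (I := rectSet R) (p := p) h
    exact hp (ModuleCat.hom_ext (LinearMap.ext fun x => by
      rw [this.allEq x 0]; exact (χ.app p).hom.map_zero))
  have hpS : p ∈ rectSet S := by
    by_contra h
    haveI := objSub_subsingleton' k (I := rectSet S) (p := p) h
    exact hp (ModuleCat.hom_ext (LinearMap.ext fun x => this.allEq _ _))
  have keyA : ∀ q, q ≤ p → q ∈ rectSet R → q ∈ rectSet S := by
    intro q hqp hqR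
    by_contra hqS
    apply hp
    have nat := χ.naturality (homOfLE hqp)
    have hzq : χ.app q = 0 := by
      haveI := objSub_subsingleton' k (I := rectSet S) (p := q) hqS
      exact ModuleCat.hom_ext (LinearMap.ext fun x => this.allEq _ _)
    rw [hzq, Limits.zero_comp] at nat
    apply ModuleCat.hom_ext
    apply LinearMap.ext
    intro x
    have hx1 : χ.app p ((intervalModule k (rectSet R)
        (rectSet_convex R fun i => (hR i).2)).map (homOfLE hqp)
        ⟨(1 : k), one_mem_objSub k hqR 1⟩) = 0 :=
      congrArg (fun g => g ⟨(1 : k), one_mem_objSub k hqR 1⟩) nat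
    have hmap : ((intervalModule k (rectSet R)
        (rectSet_convex R fun i => (hR i).2)).map (homOfLE hqp)
        ⟨(1 : k), one_mem_objSub k hqR 1⟩ : objSub k (rectSet R) p)
        = ⟨(1 : k), one_mem_objSub k hpR 1⟩ := by
      apply Subtype.ext
      exact intervalModule_map_coe k _ (homOfLE hqp) ⟨hqR, hpR⟩ _
    rw [hmap] at hx1
    have hxdec : x = x.1 • (⟨(1 : k), one_mem_objSub k hpR 1⟩ :
        objSub k (rectSet R) p) := by
      apply Subtype.ext
      simp
    have hx2 := congrArg (fun y => x.1 • y) hx1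
    simp only [smul_zero] at hx2
    have hx3 := ((χ.app p).hom.map_smul x.1 ⟨(1 : k), one_mem_objSub k hpR 1⟩).trans hx2
    exact (congrArg (χ.app p).hom hxdec).trans hx3
  have keyB : ∀ q, p ≤ q → q ∈ rectSet S → q ∈ rectSet R := by
    intro q hpq hqS
    by_contra hqR
    apply hp
    have nat := χ.naturality (homOfLE hpq)
    rw [intervalModule_map_zero' k _ (homOfLE hpq) (fun h => hqR h.2), Limits.zero_comp] at nat
    apply ModuleCat.hom_ext
    apply LinearMap.ext
    intro x
    have hx : (intervalModule k (rectSet S)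
        (rectSet_convex S fun i => (hS i).2)).map (homOfLE hpq) (χ.app p x) = 0 :=
      (congrArg (fun g => g x) nat).symm
    have hval : (χ.app p x).1 = (0 : k) := by
      have h2 := intervalModule_map_coe k (rectSet_convex S fun i => (hS i).2) (homOfLE hpq) ⟨hpS, hqS⟩ (χ.app p x)
      rw [hx] at h2
      exact h2.symm
    exact Subtype.ext hval
  constructor
  · intro i
    refine lowDec_mono (hpR i) (hpS i) ?_
    intro a haR hac
    have hq : Function.update p i a ∈ rectSet R := by
      intro j
      by_cases hj : j = i
      · subst hj; simpa using haR
      · rw [Function.update_of_ne hj]; exact hpR j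
    have hqle : Function.update p i a ≤ p := by
      intro j
      by_cases hj : j = i
      · subst hj; simpa using hac
      · rw [Function.update_of_ne hj]
    have hmem := keyA _ hqle hq i
    simpa using hmem
  · intro i
    refine highDec_mono (hpR i) (hpS i) ?_
    intro b hbS hcb
    have hq : Function.update p i b ∈ rectSet S := by
      intro j
      by_cases hj : j = i
      · subst hj; simpa using hbS
      · rw [Function.update_of_ne hj]; exact hpS j
    have hqge : p ≤ Function.update p i b := by
      intro j
      by_cases hj : j = i
      · subst hj; simpa using hcb
      · rw [Function.update_of_ne hj]
    have hmem := keyB _ hqge hq i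
    simpa using hmem
end
end
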